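/- arXiv:1611.00563 — 4 statements merged into one kernel-verified Lean document; each statement's English description precedes it below -/
import Mathlib

section
/- Let p > 1 and let α, β satisfy (p-1)/p ≤ α < β < 1. Define λ_α = (p-1)α^{p-1}(1-α), λ_β = (p-1)β^{p-1}(1-β), and A = (p-2)·λ_α·(β/α) + λ_β·(α/β)^{p-2}. Then A < (p-1)·λ_α. -/
open Real

/-- For `p > 1` and `(p-1)/p ≤ α < β < 1`, with `λ_α = (p-1)α^(p-1)(1-α)`,
`λ_β = (p-1)β^(p-1)(1-β)` and `A = (p-2)·λ_α·(β/α) + λ_β·(α/β)^(p-2)`, one has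
`A < (p-1)·λ_α`. -/
theorem stmt2 (p α β : ℝ) (hp : 1 < p) (hα : (p - 1) / p ≤ α) (hαβ : α < β) (hβ : β < 1) :
    (p - 2) * ((p - 1) * α ^ (p - 1) * (1 - α)) * (β / α)
      + ((p - 1) * β ^ (p - 1) * (1 - β)) * (α / β) ^ (p - 2)
      < (p - 1) * ((p - 1) * α ^ (p - 1) * (1 - α)) := by
  have hp0 : 0 < p := by linarith
  have hα0 : 0 < α := lt_of_lt_of_le (div_pos (by linarith) hp0) hα
  have hβ0 : 0 < β := hα0.trans hαβ
  have hpα : p - 1 ≤ α * p := by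
    rwa [div_le_iff₀ hp0] at hα
  have hA : α ^ (p - 1) = α ^ (p - 2) * α := by
    rw [show p - 1 = (p - 2) + 1 by ring, Real.rpow_add_one hα0.ne']
  have hB : β ^ (p - 1) = β ^ (p - 2) * β := by
    rw [show p - 1 = (p - 2) + 1 by ring, Real.rpow_add_one hβ0.ne']
  have hdiv : (α / β) ^ (p - 2) = α ^ (p - 2) / β ^ (p - 2) :=
    Real.div_rpow hα0.le hβ0.le _
  have ha : 0 < α ^ (p - 2) := Real.rpow_pos_of_pos hα0 _
  have hb : 0 < β ^ (p - 2) := Real.rpow_pos_of_pos hβ0 _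
  have key : (p - 2) * (1 - α) * β + β * (1 - β) < (p - 1) * α * (1 - α) := by
    nlinarith [mul_pos (sub_pos.2 hαβ) (show 0 < α * p + β - (p - 1) by linarith)]
  rw [hA, hB, hdiv]
  have h1 : (p - 2) * ((p - 1) * (α ^ (p - 2) * α) * (1 - α)) * (β / α)
      + (p - 1) * (β ^ (p - 2) * β) * (1 - β) * (α ^ (p - 2) / β ^ (p - 2))
      = ((p - 1) * α ^ (p - 2)) * ((p - 2) * (1 - α) * β + β * (1 - β)) := by
    field_simp
  rw [h1, show (p - 1) * ((p - 1) * (α ^ (p - 2) * α) * (1 - α))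
      = ((p - 1) * α ^ (p - 2)) * ((p - 1) * α * (1 - α)) by ring]
  exact mul_lt_mul_of_pos_left key (mul_pos (by linarith) ha)
end

section
/- Let p > 1 and let α, β satisfy 0 < β < α ≤ (p-1)/p. Define λ_α = (p-1)α^{p-1}(1-α), λ_β = (p-1)β^{p-1}(1-β), and A = (p-2)·λ_α·(β/α) + λ_β·(α/β)^{p-2}. Then A < (p-1)·λ_α. -/
open Real

/-- For `p > 1` and `0 < β < α ≤ (p-1)/p`, with `λ_α = (p-1)α^(p-1)(1-α)`,
`λ_β = (p-1)β^(p-1)(1-β)` and `A = (p-2)·λ_α·(β/α) + λ_β·(α/β)^(p-2)`, one has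
`A < (p-1)·λ_α`. -/
theorem stmt3 (p α β : ℝ) (hp : 1 < p) (hβ0 : 0 < β) (hβα : β < α) (hα : α ≤ (p - 1) / p) :
    (p - 2) * ((p - 1) * α ^ (p - 1) * (1 - α)) * (β / α)
      + ((p - 1) * β ^ (p - 1) * (1 - β)) * (α / β) ^ (p - 2)
      < (p - 1) * ((p - 1) * α ^ (p - 1) * (1 - α)) := by
  have hp0 : (0:ℝ) < p := by linarith
  have hα0 : 0 < α := lt_trans hβ0 hβα
  have hαp : α * p ≤ p - 1 := by
    have := (le_div_iff₀ hp0).mp hα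
    linarith
  have hα1 : α < 1 := by nlinarith
  have hkey : α ≤ (p - 1) * (1 - α) := by nlinarith
  have ha : (0:ℝ) < α ^ (p - 2) := rpow_pos_of_pos hα0 _
  have hb : (0:ℝ) < β ^ (p - 2) := rpow_pos_of_pos hβ0 _
  have e1 : α ^ (p - 1) = α ^ (p - 2) * α := by
    rw [show p - 1 = (p - 2) + 1 by ring, rpow_add hα0, rpow_one]
  have e2 : β ^ (p - 1) = β ^ (p - 2) * β := by
    rw [show p - 1 = (p - 2) + 1 by ring, rpow_add hβ0, rpow_one]
  have e3 : (α / β) ^ (p - 2) = α ^ (p - 2) / β ^ (p - 2) :=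
    div_rpow hα0.le hβ0.le _
  rw [e1, e2, e3]
  have hg1 : 0 < α - β := by linarith
  have hg2 : 0 < (p - 1) * (1 - α) - β := by linarith
  have hprod : 0 < α ^ (p - 2) * ((α - β) * ((p - 1) * (1 - α) - β)) :=
    mul_pos ha (mul_pos hg1 hg2)
  have d1 : (p - 2) * ((p - 1) * (α ^ (p - 2) * α) * (1 - α)) * (β / α)
      = (p - 2) * ((p - 1) * (1 - α)) * (α ^ (p - 2) * β) := by
    field_simp
  have d2 : (p - 1) * (β ^ (p - 2) * β) * (1 - β) * (α ^ (p - 2) / β ^ (p - 2))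
      = (p - 1) * (1 - β) * (α ^ (p - 2) * β) := by
    field_simp
  rw [d1, d2]
  nlinarith [hprod]
end

section
/- Let U ⊂ ℝⁿ be open and G : U → (0,∞) be a positive C² p-harmonic function (Δ_p G = 0). Then for every α ∈ (0,1), the function G^α satisfies -Δ_p(G^α) = λ_α · |∇G/G|^p · (G^α)^{p-1} in U, where λ_α = (p-1)α^{p-1}(1-α). -/
open Real

/-- The vector field `|∇u|^{p-2}∇u` entering the p-Laplacian. -/
noncomputable def pLapVF (n : ℕ) (p : ℝ) (u : EuclideanSpace ℝ (Fin n) → ℝ)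
    (x : EuclideanSpace ℝ (Fin n)) : EuclideanSpace ℝ (Fin n) :=
  ‖gradient u x‖ ^ (p - 2) • gradient u x

/-- The (pointwise) p-Laplacian `Δ_p u = div(|∇u|^{p-2}∇u)`. -/
noncomputable def pLap (n : ℕ) (p : ℝ) (u : EuclideanSpace ℝ (Fin n) → ℝ)
    (x : EuclideanSpace ℝ (Fin n)) : ℝ :=
  ∑ i : Fin n, fderiv ℝ (pLapVF n p u) x (EuclideanSpace.single i 1) i

lemma fderiv_apply_eq_inner {n : ℕ} (f : EuclideanSpace ℝ (Fin n) → ℝ)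
    (x v : EuclideanSpace ℝ (Fin n)) :
    fderiv ℝ f x v = @inner ℝ _ _ (gradient f x) v := by
  rw [gradient, ← InnerProductSpace.toDual_apply_apply, LinearIsometryEquiv.apply_symm_apply]

lemma my_fderiv_single {n : ℕ} (f : EuclideanSpace ℝ (Fin n) → ℝ) (x : EuclideanSpace ℝ (Fin n))
    (i : Fin n) : fderiv ℝ f x (EuclideanSpace.single i 1) = gradient f x i := by
  rw [fderiv_apply_eq_inner, EuclideanSpace.inner_single_right]; simp

/-- If `G > 0` is a C² p-harmonic function on an open set `U`, then for every `α ∈ (0,1)`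
the function `G^α` satisfies `-Δ_p(G^α) = λ_α·|∇G/G|^p·(G^α)^{p-1}` in `U`, where
`λ_α = (p-1)α^(p-1)(1-α)`. -/
theorem stmt7 (n : ℕ) (p : ℝ) (hp : 1 < p) (U : Set (EuclideanSpace ℝ (Fin n)))
    (hU : IsOpen U) (G : EuclideanSpace ℝ (Fin n) → ℝ) (hG : ContDiffOn ℝ 2 G U)
    (hGpos : ∀ x ∈ U, 0 < G x) (hGharm : ∀ x ∈ U, pLap n p G x = 0)
    (α : ℝ) (hα : α ∈ Set.Ioo (0 : ℝ) 1) :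
    ∀ x ∈ U, -pLap n p (fun y => G y ^ α) x
      = ((p - 1) * α ^ (p - 1) * (1 - α)) * (‖gradient G x‖ / G x) ^ p *
          (G x ^ α) ^ (p - 1) := by
  obtain ⟨hα0, hα1⟩ := hα
  intro x hx
  set H : EuclideanSpace ℝ (Fin n) → ℝ := fun y => G y ^ α with hH
  set F : _ := pLapVF n p G with hFdef
  set c : EuclideanSpace ℝ (Fin n) → ℝ := fun y => α ^ (p - 1) * G y ^ ((α - 1) * (p - 1)) with hc
  have hmem : U ∈ nhds x := hU.mem_nhds hx
  have hGx : 0 < G x := hGpos x hx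
  have hdiffG : ∀ y ∈ U, DifferentiableAt ℝ G y := fun y hy =>
    ((hG.contDiffAt (hU.mem_nhds hy)).differentiableAt (by norm_num))
  -- gradient of H
  have hgradH : ∀ y ∈ U, gradient H y = (α * G y ^ (α - 1)) • gradient G y := by
    intro y hy
    have h2 : HasFDerivAt H ((α * G y ^ (α - 1)) • fderiv ℝ G y) y :=
      (hdiffG y hy).hasFDerivAt.rpow_const (Or.inl (hGpos y hy).ne')
    rw [gradient, h2.fderiv, map_smul, gradient]
  -- scaling identity for the vector field
  have hVF : ∀ y ∈ U, pLapVF n p H y = c y • F y := by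
    intro y hy
    have hs : 0 < α * G y ^ (α - 1) :=
      mul_pos hα0 (rpow_pos_of_pos (hGpos y hy) _)
    have hcy : c y = (α * G y ^ (α - 1)) ^ (p - 1) := by
      simp only [hc]
      rw [Real.mul_rpow hα0.le (rpow_pos_of_pos (hGpos y hy) _).le,
        ← Real.rpow_mul (hGpos y hy).le]
    have hkey : (α * G y ^ (α - 1)) ^ (p - 2) * (α * G y ^ (α - 1))
        = (α * G y ^ (α - 1)) ^ (p - 1) := by
      nth_rewrite 2 [← Real.rpow_one (α * G y ^ (α - 1))]
      rw [← Real.rpow_add hs]; ring_nf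
    rw [hFdef, pLapVF, pLapVF, hgradH y hy, norm_smul, Real.norm_eq_abs,
      abs_of_pos hs, Real.mul_rpow hs.le (norm_nonneg _), smul_smul, smul_smul]
    congr 1
    rw [hcy, mul_right_comm, hkey]
  -- eventual equality of vector fields near x
  have heq : pLapVF n p H =ᶠ[nhds x] fun y => c y • F y :=
    Filter.eventuallyEq_of_mem hmem (fun y hy => hVF y hy)
  set β : ℝ := (α - 1) * (p - 1) with hβ
  set k : ℝ := α ^ (p - 1) * (β * G x ^ (β - 1)) with hk
  have hcder : HasFDerivAt c (k • fderiv ℝ G x) x := by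
    have := ((hdiffG x hx).hasFDerivAt.rpow_const
      (p := β) (Or.inl hGx.ne')).const_mul (α ^ (p - 1))
    simpa [hk, smul_smul, hc] using this
  -- the key divergence computation, assuming F is differentiable at x
  have key : DifferentiableAt ℝ F x → pLap n p H x
      = c x * pLap n p G x + k * (‖gradient G x‖ ^ (p - 2)
          * ∑ i : Fin n, gradient G x i * gradient G x i) := by
    intro hFd
    have hcF : HasFDerivAt (fun y => c y • F y)
        (c x • fderiv ℝ F x + (k • fderiv ℝ G x).smulRight (F x)) x :=
      hcder.smul hFd.hasFDerivAt
    have hfH : fderiv ℝ (pLapVF n p H) x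
        = c x • fderiv ℝ F x + (k • fderiv ℝ G x).smulRight (F x) := by
      rw [heq.fderiv_eq, hcF.fderiv]
    have hFx : F x = ‖gradient G x‖ ^ (p - 2) • gradient G x := rfl
    simp only [pLap, hfH, ContinuousLinearMap.add_apply, ContinuousLinearMap.smul_apply,
      ContinuousLinearMap.smulRight_apply, PiLp.add_apply, PiLp.smul_apply, smul_eq_mul,
      Finset.sum_add_distrib, my_fderiv_single, hFx]
    rw [hFdef]
    congr 1
    · rw [Finset.mul_sum]
    · rw [Finset.mul_sum, Finset.mul_sum]
      exact Finset.sum_congr rfl fun i _ => by ring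
  have cpos : ∀ y ∈ U, 0 < c y := fun y hy => by
    have := hGpos y hy
    simp only [hc]
    positivity
  have hnorm2 : ∑ i : Fin n, gradient G x i * gradient G x i = ‖gradient G x‖ ^ (2 : ℕ) := by
    rw [EuclideanSpace.norm_eq, Real.sq_sqrt (Finset.sum_nonneg fun i _ => sq_nonneg _)]
    simp [sq]
  by_cases hw : gradient G x = 0
  · -- critical point: both sides vanish
    have hRHS : (‖gradient G x‖ / G x) ^ p = 0 := by
      rw [hw, norm_zero, zero_div, Real.zero_rpow (by linarith : p ≠ 0)]
    rw [hRHS, mul_zero, zero_mul, neg_eq_zero]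
    by_cases hFd : DifferentiableAt ℝ (fun y => c y • F y) x
    · have hcne : F =ᶠ[nhds x] fun y => (c y)⁻¹ • (c y • F y) := by
        filter_upwards [hmem] with y hy
        rw [smul_smul, inv_mul_cancel₀ (cpos y hy).ne', one_smul]
      have hFdiff : DifferentiableAt ℝ F x :=
        hcne.symm.differentiableAt_iff.mp
          ((hcder.differentiableAt.inv (cpos x hx).ne').smul hFd)
      rw [key hFdiff, hGharm x hx, mul_zero, zero_add]
      simp [hw]
    · have hnd : ¬ DifferentiableAt ℝ (pLapVF n p H) x := fun h =>
        hFd (heq.differentiableAt_iff.mp h)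
      simp [pLap, fderiv_zero_of_not_differentiableAt hnd]
  · -- noncritical point
    have hN : 0 < ‖gradient G x‖ := norm_pos_iff.mpr hw
    have h1 : ContDiffAt ℝ 1 (fderiv ℝ G) x :=
      (hG.contDiffAt hmem).fderiv_right (by norm_num)
    have h2 : DifferentiableAt ℝ (fderiv ℝ G) x := h1.differentiableAt one_ne_zero
    have h3 : DifferentiableAt ℝ (gradient G) x :=
      (((InnerProductSpace.toDual ℝ
        (EuclideanSpace ℝ (Fin n))).symm.toContinuousLinearEquiv.comp_differentiableAt_iff).mpr h2)
    have hφ : DifferentiableAt ℝ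
        (fun v : EuclideanSpace ℝ (Fin n) => ‖v‖ ^ (p - 2) • v) (gradient G x) :=
      ((differentiableAt_id.norm ℝ hw).rpow_const (Or.inl hN.ne')).smul differentiableAt_id
    have hFd : DifferentiableAt ℝ F x := hφ.comp x h3
    rw [key hFd, hGharm x hx, mul_zero, zero_add, hnorm2]
    have hpow : ‖gradient G x‖ ^ (p - 2) * ‖gradient G x‖ ^ (2 : ℕ)
        = ‖gradient G x‖ ^ p := by
      rw [← Real.rpow_natCast _ 2, ← Real.rpow_add hN]
      norm_num
    rw [hpow, Real.div_rpow (norm_nonneg _) hGx.le, ← Real.rpow_mul hGx.le]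
    have hβ1 : G x ^ (β - 1) = G x ^ (α * (p - 1)) / G x ^ p := by
      rw [← Real.rpow_sub hGx]
      congr 1
      simp only [hβ]; ring
    rw [hk, hβ1]
    have hGp : G x ^ p ≠ 0 := (Real.rpow_pos_of_pos hGx p).ne'
    simp only [hβ]
    field_simp
    ring
end

section
/- Let U ⊂ ℝⁿ be open and G : U → (0,∞) a positive C² function with nonvanishing gradient. Then for all α, β > 0, Δ_p(G^α + G^β) = |αG^{α-1} + βG^{β-1}|^{p-2} · [ (αG^{α-1} + βG^{β-1})·Δ_p G + (p-1)|∇G|^p·((α²-α)G^{α-2} + (β²-β)G^{β-2}) ] pointwise in U. -/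
open Real

section aux

open InnerProductSpace

variable {n : ℕ}

lemma aux_gradComp {G : EuclideanSpace ℝ (Fin n) → ℝ} {φ : ℝ → ℝ} {c : ℝ}
    {x : EuclideanSpace ℝ (Fin n)} (hG : DifferentiableAt ℝ G x)
    (hφ : HasDerivAt φ c (G x)) :
    HasGradientAt (fun y => φ (G y)) (c • gradient G x) x := by
  have hF : HasFDerivAt G (toDual ℝ _ (gradient G x)) x := hG.hasGradientAt.hasFDerivAt
  have hc := hφ.comp_hasFDerivAt x hF
  rw [hasGradientAt_iff_hasFDerivAt, map_smul]
  exact hc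

lemma aux_gradC1 {G : EuclideanSpace ℝ (Fin n) → ℝ} {x : EuclideanSpace ℝ (Fin n)}
    (h2 : ContDiffAt ℝ 2 G x) : ContDiffAt ℝ 1 (gradient G) x := by
  have hf : ContDiffAt ℝ 1 (fderiv ℝ G) x := h2.fderiv_right (by norm_num)
  exact ((toDual ℝ (EuclideanSpace ℝ (Fin n))).symm.contDiff.contDiffAt).comp x hf

lemma aux_fdApply {G : EuclideanSpace ℝ (Fin n) → ℝ} {x : EuclideanSpace ℝ (Fin n)}
    (i : Fin n) :
    fderiv ℝ G x (EuclideanSpace.single i 1) = gradient G x i := by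
  have h : fderiv ℝ G x = toDual ℝ _ (gradient G x) :=
    ((toDual ℝ _).apply_symm_apply _).symm
  rw [h, toDual_apply_apply, EuclideanSpace.inner_single_right]
  simp

lemma aux_sumsq (v : EuclideanSpace ℝ (Fin n)) : ∑ i, v i * v i = ‖v‖ ^ (2:ℕ) := by
  rw [EuclideanSpace.norm_eq, Real.sq_sqrt (Finset.sum_nonneg fun i _ => sq_nonneg _)]
  simp only [Real.norm_eq_abs, sq, abs_mul_abs_self]

end aux

/-- For a positive C² function `G` with nonvanishing gradient on an open set `U` and
`α, β > 0`, the pointwise formula for `Δ_p(G^α + G^β)` holds in `U`. -/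
theorem stmt8 (n : ℕ) (p : ℝ) (hp : 1 < p) (U : Set (EuclideanSpace ℝ (Fin n)))
    (hU : IsOpen U) (G : EuclideanSpace ℝ (Fin n) → ℝ) (hG : ContDiffOn ℝ 2 G U)
    (hGpos : ∀ x ∈ U, 0 < G x) (hGgrad : ∀ x ∈ U, gradient G x ≠ 0)
    (α β : ℝ) (hα : 0 < α) (hβ : 0 < β) :
    ∀ x ∈ U, pLap n p (fun y => G y ^ α + G y ^ β) x
      = |α * G x ^ (α - 1) + β * G x ^ (β - 1)| ^ (p - 2) *
          ((α * G x ^ (α - 1) + β * G x ^ (β - 1)) * pLap n p G x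
            + (p - 1) * ‖gradient G x‖ ^ p *
                ((α ^ 2 - α) * G x ^ (α - 2) + (β ^ 2 - β) * G x ^ (β - 2))) := by
  intro x hx
  have hGd : ∀ y ∈ U, DifferentiableAt ℝ G y := fun y hy =>
    (hG.contDiffAt (hU.mem_nhds hy)).differentiableAt two_ne_zero
  -- positivity of c₀ on U
  have hc₀pos : ∀ y ∈ U, 0 < α * G y ^ (α - 1) + β * G y ^ (β - 1) := fun y hy =>
    add_pos (mul_pos hα (rpow_pos_of_pos (hGpos y hy) _))
      (mul_pos hβ (rpow_pos_of_pos (hGpos y hy) _))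
  -- gradient of u on U
  have hgradu : ∀ y ∈ U, gradient (fun y => G y ^ α + G y ^ β) y
      = (α * G y ^ (α - 1) + β * G y ^ (β - 1)) • gradient G y := by
    intro y hy
    have h1 := Real.hasDerivAt_rpow_const (x := G y) (p := α) (Or.inl (hGpos y hy).ne')
    have h2 := Real.hasDerivAt_rpow_const (x := G y) (p := β) (Or.inl (hGpos y hy).ne')
    exact (aux_gradComp (hGd y hy) (h1.add h2)).gradient
  -- pLapVF of u equals scaled pLapVF of G on U
  have hVF : ∀ y ∈ U, pLapVF n p (fun y => G y ^ α + G y ^ β) y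
      = ((α * G y ^ (α - 1) + β * G y ^ (β - 1)) ^ (p - 1)) • pLapVF n p G y := by
    intro y hy
    have hc := hc₀pos y hy
    simp only [pLapVF, hgradu y hy]
    rw [norm_smul, Real.norm_eq_abs, abs_of_pos hc,
      Real.mul_rpow hc.le (norm_nonneg _), smul_smul, smul_smul]
    congr 1
    rw [show p - 1 = (p - 2) + 1 by ring, Real.rpow_add_one hc.ne']
    ring
  -- eventual equality near x, hence fderiv equality
  have hEv : pLapVF n p (fun y => G y ^ α + G y ^ β)
      =ᶠ[nhds x] fun y => ((α * G y ^ (α - 1) + β * G y ^ (β - 1)) ^ (p - 1)) • pLapVF n p G y :=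
    Filter.eventuallyEq_of_mem (hU.mem_nhds hx) hVF
  -- differentiability of pLapVF G at x
  have hgx : gradient G x ≠ 0 := hGgrad x hx
  have hgrad1 : ContDiffAt ℝ 1 (gradient G) x := aux_gradC1 (hG.contDiffAt (hU.mem_nhds hx))
  have hnormd : DifferentiableAt ℝ (fun y => ‖gradient G y‖ ^ (p - 2)) x :=
    ((hgrad1.norm ℝ hgx).differentiableAt one_ne_zero).rpow_const (Or.inl (norm_ne_zero_iff.2 hgx))
  have hVd : DifferentiableAt ℝ (pLapVF n p G) x :=
    hnormd.smul (hgrad1.differentiableAt one_ne_zero)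
  -- derivative of the scalar factor c at x
  have hg0 : (0:ℝ) < G x := hGpos x hx
  have hc₀ : 0 < α * G x ^ (α - 1) + β * G x ^ (β - 1) := hc₀pos x hx
  have h1 := (Real.hasDerivAt_rpow_const (x := G x) (p := α - 1) (Or.inl hg0.ne')).const_mul α
  have h2 := (Real.hasDerivAt_rpow_const (x := G x) (p := β - 1) (Or.inl hg0.ne')).const_mul β
  have hφ' := ((h1.add h2).rpow_const (p := p - 1) (Or.inl hc₀.ne'))
  have hGF : HasFDerivAt G (fderiv ℝ G x) x := (hGd x hx).hasFDerivAt
  have hcF : HasFDerivAt (fun y => (α * G y ^ (α - 1) + β * G y ^ (β - 1)) ^ (p - 1))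
      (((α * ((α - 1) * G x ^ (α - 1 - 1)) + β * ((β - 1) * G x ^ (β - 1 - 1))) * (p - 1) *
        (α * G x ^ (α - 1) + β * G x ^ (β - 1)) ^ (p - 1 - 1)) • fderiv ℝ G x) x :=
    hφ'.comp_hasFDerivAt x hGF
  set k : ℝ := (α * ((α - 1) * G x ^ (α - 1 - 1)) + β * ((β - 1) * G x ^ (β - 1 - 1))) * (p - 1) *
        (α * G x ^ (α - 1) + β * G x ^ (β - 1)) ^ (p - 1 - 1) with hk
  have hprod := hcF.smul hVd.hasFDerivAt
  -- compute pLap of u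
  have key : pLap n p (fun y => G y ^ α + G y ^ β) x
      = (α * G x ^ (α - 1) + β * G x ^ (β - 1)) ^ (p - 1) * pLap n p G x
        + k * (‖gradient G x‖ ^ (p - 2) * ‖gradient G x‖ ^ (2:ℕ)) := by
    unfold pLap
    rw [show fderiv ℝ (pLapVF n p (fun y => G y ^ α + G y ^ β)) x
        = fderiv ℝ (fun y => ((α * G y ^ (α - 1) + β * G y ^ (β - 1)) ^ (p - 1)) • pLapVF n p G y) x
        from hEv.fderiv_eq, HasFDerivAt.fderiv (f := fun y => ((α * G y ^ (α - 1) + β * G y ^ (β - 1)) ^ (p - 1)) • pLapVF n p G y) hprod]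
    simp only [ContinuousLinearMap.add_apply, ContinuousLinearMap.coe_smul',
      Pi.smul_apply, ContinuousLinearMap.smulRight_apply, PiLp.add_apply,
      PiLp.smul_apply, smul_eq_mul, ContinuousLinearMap.smul_apply]
    rw [Finset.sum_add_distrib, ← Finset.mul_sum]
    congr 1
    have hVxi : ∀ i, pLapVF n p G x i = ‖gradient G x‖ ^ (p - 2) * gradient G x i := by
      intro i; simp [pLapVF]
    calc ∑ i, k * fderiv ℝ G x (EuclideanSpace.single i 1) * pLapVF n p G x i
        = ∑ i, k * ‖gradient G x‖ ^ (p - 2) * (gradient G x i * gradient G x i) := by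
          refine Finset.sum_congr rfl fun i _ => ?_
          rw [aux_fdApply i, hVxi i]; ring
      _ = k * ‖gradient G x‖ ^ (p - 2) * ∑ i, gradient G x i * gradient G x i := by
          rw [← Finset.mul_sum]
      _ = k * (‖gradient G x‖ ^ (p - 2) * ‖gradient G x‖ ^ (2:ℕ)) := by
          rw [aux_sumsq]; ring
  rw [key]
  -- final arithmetic
  have hvpos : (0:ℝ) < ‖gradient G x‖ := norm_pos_iff.2 hgx
  have hnp : ‖gradient G x‖ ^ (p - 2) * ‖gradient G x‖ ^ (2:ℕ) = ‖gradient G x‖ ^ p := by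
    rw [← Real.rpow_natCast ‖gradient G x‖ 2, ← Real.rpow_add hvpos]; norm_num
  have hcp : (α * G x ^ (α - 1) + β * G x ^ (β - 1)) ^ (p - 1)
      = (α * G x ^ (α - 1) + β * G x ^ (β - 1)) ^ (p - 2) *
        (α * G x ^ (α - 1) + β * G x ^ (β - 1)) := by
    rw [show p - 1 = (p - 2) + 1 by ring, Real.rpow_add_one hc₀.ne']
  rw [hnp, hcp, abs_of_pos hc₀, hk,
    show α - 1 - 1 = α - 2 by ring, show β - 1 - 1 = β - 2 by ring,
    show p - 1 - 1 = p - 2 by ring]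
  ring
end
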